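/- The function λ*(n) = (n + NnΔ/sqrt((N+n)L/2 − Δ²Nn))/(N+n), defined for integers 1 ≤ n < L/(2Δ²) with fixed N ≥ 1, Δ > 0, L > 0, is strictly increasing in n and strictly increasing in Δ (for fixed n in the valid range). -/

import Mathlib

private lemma stmt18_hasDeriv (a L Δ t : ℝ) (ha : 1 ≤ a) (hL : 0 < L) (hΔ : 0 < Δ)
    (ht0 : 0 < t) (htB : Δ ^ 2 * t < L / 2) :
    HasDerivAt (fun t : ℝ => (t + a * t * Δ / Real.sqrt ((a + t) * L / 2 - Δ ^ 2 * a * t)) / (a + t))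
      (((1 + (a * Δ * Real.sqrt ((a + t) * L / 2 - Δ ^ 2 * a * t) -
          a * t * Δ * ((L / 2 - Δ ^ 2 * a) / (2 * Real.sqrt ((a + t) * L / 2 - Δ ^ 2 * a * t)))) /
          (Real.sqrt ((a + t) * L / 2 - Δ ^ 2 * a * t)) ^ 2) * (a + t) -
        (t + a * t * Δ / Real.sqrt ((a + t) * L / 2 - Δ ^ 2 * a * t)) * 1) / (a + t) ^ 2) t := by
  have ha0 : 0 < a := lt_of_lt_of_le one_pos ha
  have hS : 0 < (a + t) * L / 2 - Δ ^ 2 * a * t := by nlinarith [mul_lt_mul_of_pos_left htB ha0]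
  have hs0 : 0 < Real.sqrt ((a + t) * L / 2 - Δ ^ 2 * a * t) := Real.sqrt_pos.mpr hS
  have h1 : HasDerivAt (fun t : ℝ => (a + t) * L / 2 - Δ ^ 2 * a * t) (L / 2 - Δ ^ 2 * a) t := by
    have := ((((hasDerivAt_id t).const_add a).mul_const L).div_const 2).sub
      ((hasDerivAt_id t).const_mul (Δ ^ 2 * a))
    simpa [Pi.sub_def] using this
  have h2 := h1.sqrt (ne_of_gt hS)
  have h3 : HasDerivAt (fun t : ℝ => a * t * Δ) (a * Δ) t := by
    simpa using ((hasDerivAt_id t).const_mul a).mul_const Δ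
  have h4 := h3.div h2 (ne_of_gt hs0)
  have h5 := (hasDerivAt_id t).add h4
  have h6 : HasDerivAt (fun t : ℝ => a + t) 1 t := (hasDerivAt_id t).const_add a
  have h7 := h5.div h6 (by positivity)
  exact h7

private lemma stmt18_derivPos (a L Δ t : ℝ) (ha : 1 ≤ a) (hL : 0 < L) (hΔ : 0 < Δ)
    (ht0 : 0 < t) (htB : Δ ^ 2 * t < L / 2) :
    0 < ((1 + (a * Δ * Real.sqrt ((a + t) * L / 2 - Δ ^ 2 * a * t) -
          a * t * Δ * ((L / 2 - Δ ^ 2 * a) / (2 * Real.sqrt ((a + t) * L / 2 - Δ ^ 2 * a * t)))) /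
          (Real.sqrt ((a + t) * L / 2 - Δ ^ 2 * a * t)) ^ 2) * (a + t) -
        (t + a * t * Δ / Real.sqrt ((a + t) * L / 2 - Δ ^ 2 * a * t)) * 1) / (a + t) ^ 2 := by
  have ha0 : 0 < a := lt_of_lt_of_le one_pos ha
  have hS : 0 < (a + t) * L / 2 - Δ ^ 2 * a * t := by nlinarith [mul_lt_mul_of_pos_left htB ha0]
  set s := Real.sqrt ((a + t) * L / 2 - Δ ^ 2 * a * t) with hs_def
  have hs0 : 0 < s := Real.sqrt_pos.mpr hS
  have hs2 : s ^ 2 = (a + t) * L / 2 - Δ ^ 2 * a * t := Real.sq_sqrt hS.le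
  have k1 : L * t / 2 ≤ s ^ 2 := by nlinarith
  have k2 : Δ * t < s := by nlinarith [mul_pos hΔ ht0, mul_pos ht0 ht0]
  have hX : 2 * s ^ 2 * a - t * (L / 2 - Δ ^ 2 * a) * (a + t) =
      a ^ 2 * L + L / 2 * (t * (a - t)) - Δ ^ 2 * a * (t * (a - t)) := by
    rw [hs2]; ring
  have key : 0 < 2 * a * s ^ 3 + Δ * a * (2 * s ^ 2 * a - t * (L / 2 - Δ ^ 2 * a) * (a + t)) := by
    rw [hX]
    rcases le_or_gt t a with hta | hta
    · nlinarith [mul_pos (mul_pos ha0 hs0) (mul_pos hs0 hs0),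
        mul_nonneg (mul_nonneg (mul_nonneg hΔ.le hL.le) (mul_pos ha0 ht0).le) (sub_nonneg.mpr hta),
        mul_nonneg (mul_nonneg (mul_pos hΔ (mul_pos hΔ hΔ)).le (mul_pos (mul_pos ha0 ha0) ht0).le) ht0.le,
        mul_lt_mul_of_pos_left htB (mul_pos (mul_pos hΔ ha0) (mul_pos ha0 ha0))]
    · have h1 : Δ * L * t ^ 2 / 2 < s ^ 3 := by
        nlinarith [mul_le_mul_of_nonneg_left k1 hs0.le, mul_pos (sub_pos.mpr k2) (mul_pos hL ht0)]
      nlinarith [mul_lt_mul_of_pos_left h1 ha0,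
        mul_pos (mul_pos hΔ hL) (mul_pos (mul_pos ha0 ha0) ht0),
        mul_pos (mul_pos (mul_pos hΔ (mul_pos hΔ hΔ)) (mul_pos (mul_pos ha0 ha0) ht0)) (sub_pos.mpr hta),
        mul_pos (mul_pos (mul_pos hΔ hL) (mul_pos ha0 ha0)) ha0]
  have hnum : (1 + (a * Δ * s - a * t * Δ * ((L / 2 - Δ ^ 2 * a) / (2 * s))) / s ^ 2) * (a + t) -
      (t + a * t * Δ / s) * 1 =
      (2 * a * s ^ 3 + Δ * a * (2 * s ^ 2 * a - t * (L / 2 - Δ ^ 2 * a) * (a + t))) / (2 * s ^ 3) := by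
    field_simp
    ring
  rw [hnum]
  positivity

private lemma stmt18_mono (a L Δ : ℝ) (ha : 1 ≤ a) (hL : 0 < L) (hΔ : 0 < Δ) :
    StrictMonoOn (fun t : ℝ =>
      (t + a * t * Δ / Real.sqrt ((a + t) * L / 2 - Δ ^ 2 * a * t)) / (a + t))
      (Set.Ico 1 (L / (2 * Δ ^ 2))) := by
  have hB : ∀ t : ℝ, t ∈ Set.Ico (1:ℝ) (L / (2 * Δ ^ 2)) → 0 < t ∧ Δ ^ 2 * t < L / 2 := by
    intro t ht
    refine ⟨lt_of_lt_of_le one_pos ht.1, ?_⟩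
    have h2 : (0:ℝ) < 2 * Δ ^ 2 := by positivity
    have := (lt_div_iff₀ h2).mp ht.2
    linarith
  apply strictMonoOn_of_deriv_pos (convex_Ico _ _)
  · intro t ht
    obtain ⟨ht0, htB⟩ := hB t ht
    exact (stmt18_hasDeriv a L Δ t ha hL hΔ ht0 htB).continuousAt.continuousWithinAt
  · intro t ht
    rw [interior_Ico] at ht
    obtain ⟨ht0, htB⟩ := hB t ⟨ht.1.le, ht.2⟩
    rw [(stmt18_hasDeriv a L Δ t ha hL hΔ ht0 htB).deriv]
    exact stmt18_derivPos a L Δ t ha hL hΔ ht0 htB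

/-- Monotonicity of the optimal data-pooling weight
`λ*(n, Δ) = (n + NnΔ/sqrt((N+n)L/2 − Δ²Nn))/(N+n)`: strictly increasing in `n`
and strictly increasing in `Δ`, on the valid range `1 ≤ n < L/(2Δ²)`. -/
theorem stmt_18 (N : ℕ) (hN : 1 ≤ N) (L : ℝ) (hL : 0 < L) :
    letI f : ℕ → ℝ → ℝ := fun n Δ =>
      ((n : ℝ) + (N : ℝ) * n * Δ /
        Real.sqrt (((N : ℝ) + n) * L / 2 - Δ ^ 2 * N * n)) / ((N : ℝ) + n)
    (∀ Δ : ℝ, 0 < Δ → ∀ n n' : ℕ, 1 ≤ n → n < n' →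
      (n' : ℝ) < L / (2 * Δ ^ 2) → f n Δ < f n' Δ) ∧
    (∀ n : ℕ, 1 ≤ n → ∀ Δ Δ' : ℝ, 0 < Δ → Δ < Δ' →
      (n : ℝ) < L / (2 * Δ' ^ 2) → f n Δ < f n Δ') := by
  have ha : (1:ℝ) ≤ (N:ℝ) := by exact_mod_cast hN
  have ha0 : (0:ℝ) < (N:ℝ) := lt_of_lt_of_le one_pos ha
  constructor
  · intro Δ hΔ n n' hn hnn' hn'B
    have hn1 : (1:ℝ) ≤ (n:ℝ) := by exact_mod_cast hn
    have hnn : (n:ℝ) < (n':ℝ) := by exact_mod_cast hnn'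
    have hmem : (n:ℝ) ∈ Set.Ico (1:ℝ) (L / (2 * Δ ^ 2)) := ⟨hn1, lt_trans hnn hn'B⟩
    have hmem' : (n':ℝ) ∈ Set.Ico (1:ℝ) (L / (2 * Δ ^ 2)) := ⟨le_trans hn1 hnn.le, hn'B⟩
    exact stmt18_mono (N:ℝ) L Δ ha hL hΔ hmem hmem' hnn
  · intro n hn Δ Δ' hΔ hΔΔ' hnB
    have hn1 : (1:ℝ) ≤ (n:ℝ) := by exact_mod_cast hn
    have hn0 : (0:ℝ) < (n:ℝ) := lt_of_lt_of_le one_pos hn1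
    have hΔ' : (0:ℝ) < Δ' := lt_trans hΔ hΔΔ'
    have htB' : Δ' ^ 2 * (n:ℝ) < L / 2 := by
      have h2 : (0:ℝ) < 2 * Δ' ^ 2 := by positivity
      have := (lt_div_iff₀ h2).mp hnB
      linarith
    have hS' : 0 < ((N:ℝ) + n) * L / 2 - Δ' ^ 2 * N * n := by
      nlinarith [mul_lt_mul_of_pos_left htB' ha0]
    have hS : 0 < ((N:ℝ) + n) * L / 2 - Δ ^ 2 * N * n := by
      nlinarith [mul_pos (mul_pos hn0 ha0) (mul_pos (add_pos hΔ hΔ') (sub_pos.mpr hΔΔ'))]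
    have hσ' : 0 < Real.sqrt (((N:ℝ) + n) * L / 2 - Δ' ^ 2 * N * n) := Real.sqrt_pos.mpr hS'
    have hσ : 0 < Real.sqrt (((N:ℝ) + n) * L / 2 - Δ ^ 2 * N * n) := Real.sqrt_pos.mpr hS
    have hle : Real.sqrt (((N:ℝ) + n) * L / 2 - Δ' ^ 2 * N * n) ≤
        Real.sqrt (((N:ℝ) + n) * L / 2 - Δ ^ 2 * N * n) := by
      apply Real.sqrt_le_sqrt
      nlinarith [mul_pos (mul_pos hn0 ha0) (mul_pos (add_pos hΔ hΔ') (sub_pos.mpr hΔΔ'))]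
    have hdiv : Δ / Real.sqrt (((N:ℝ) + n) * L / 2 - Δ ^ 2 * N * n) <
        Δ' / Real.sqrt (((N:ℝ) + n) * L / 2 - Δ' ^ 2 * N * n) :=
      div_lt_div₀ hΔΔ' hle hΔ'.le hσ'
    have hNn : (0:ℝ) < (N:ℝ) * n := mul_pos ha0 hn0
    have hden : (0:ℝ) < (N:ℝ) + n := by linarith
    have hnum : (n:ℝ) + (N:ℝ) * n * Δ / Real.sqrt (((N:ℝ) + n) * L / 2 - Δ ^ 2 * N * n) <
        (n:ℝ) + (N:ℝ) * n * Δ' / Real.sqrt (((N:ℝ) + n) * L / 2 - Δ' ^ 2 * N * n) := by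
      have h := mul_lt_mul_of_pos_left hdiv hNn
      rw [← mul_div_assoc, ← mul_div_assoc] at h
      linarith
    exact (div_lt_div_iff_of_pos_right hden).mpr hnum
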